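/- arXiv:2306.05697 — 2 statements merged into one kernel-verified Lean document; each statement's English description precedes it below -/
import Mathlib

section
/- Let ν ∈ ℝ, let R : ℝ² → ℝ² be a linear isometry equivalence (orthogonal transformation), and let u : ℝ² × ℝ → ℝ², w : ℝ² × ℝ → ℝ, f : ℝ² → ℝ with f rotation-invariant in the sense that f(Rx) = f(x) for all x. Assume that for every t the map x ↦ w(x,t) is twice continuously differentiable, for every t the map x ↦ u(x,t) is differentiable, for every x the map t ↦ w(x,t) is differentiable, and that at every (x,t): ∂ₜw(x,t) + ⟨u(x,t), ∇ₓw(x,t)⟩ = ν·Δₓw(x,t) + f(x) and ∇ₓ·u(x,t) = 0. Then the transformed pair u_R(x,t) := R⁻¹(u(Rx,t)), w_R(x,t) := w(Rx,t) satisfies at every (x,t): ∂ₜw_R(x,t) + ⟨u_R(x,t), ∇ₓw_R(x,t)⟩ = ν·Δₓw_R(x,t) + f(x) and ∇ₓ·u_R(x,t) = 0; that is, the solution set of the vorticity Navier–Stokes equation with invariant forcing is closed under the transformation R. -/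
open MeasureTheory
open scoped RealInnerProductSpace

/-- The Laplacian of `w : ℝ² → ℝ` at `x`: the trace of the second Fréchet
derivative of `w` at `x`, computed on the standard orthonormal basis. -/
noncomputable def laplacian2 (w : EuclideanSpace ℝ (Fin 2) → ℝ)
    (x : EuclideanSpace ℝ (Fin 2)) : ℝ :=
  ∑ i : Fin 2,
    fderiv ℝ (fderiv ℝ w) x (EuclideanSpace.single i (1 : ℝ))
      (EuclideanSpace.single i (1 : ℝ))

/-- The divergence of the vector field `v : ℝ² → ℝ²` at `x`: the trace of the
Fréchet derivative of `v` at `x`. -/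
noncomputable def divergence2
    (v : EuclideanSpace ℝ (Fin 2) → EuclideanSpace ℝ (Fin 2))
    (x : EuclideanSpace ℝ (Fin 2)) : ℝ :=
  LinearMap.trace ℝ (EuclideanSpace ℝ (Fin 2)) (fderiv ℝ v x).toLinearMap

local notation "E2" => EuclideanSpace ℝ (Fin 2)

lemma aux_fderiv_comp (R : E2 ≃ₗᵢ[ℝ] E2) {F : Type*} [NormedAddCommGroup F]
    [NormedSpace ℝ F] (g : E2 → F) (hg : Differentiable ℝ g) (x : E2) :
    fderiv ℝ (fun y => g (R y)) x = (fderiv ℝ g (R x)).comp (R : E2 →L[ℝ] E2) := by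
  rw [show (fun y => g (R y)) = g ∘ R from rfl,
    fderiv_comp x (hg _) R.differentiableAt, R.fderiv]

lemma aux_grad_comp (R : E2 ≃ₗᵢ[ℝ] E2) (g : E2 → ℝ) (hg : Differentiable ℝ g) (x : E2) :
    gradient (fun y => g (R y)) x = R.symm (gradient g (R x)) := by
  unfold gradient
  rw [aux_fderiv_comp R g hg x]
  apply (InnerProductSpace.toDual ℝ E2).injective
  rw [LinearIsometryEquiv.apply_symm_apply]
  ext v
  simp only [InnerProductSpace.toDual_apply_apply, ContinuousLinearMap.coe_comp', Function.comp_apply]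
  rw [show ((R : E2 →L[ℝ] E2) v) = R v from rfl, ← R.inner_map_map,
    R.apply_symm_apply, ← InnerProductSpace.toDual_apply_apply,
    (InnerProductSpace.toDual ℝ E2).apply_symm_apply]

lemma aux_coord (R : E2 ≃ₗᵢ[ℝ] E2) (i j : Fin 2) :
    (R (EuclideanSpace.single i (1:ℝ))) j = (R.symm (EuclideanSpace.single j (1:ℝ))) i := by
  have h1 : (R (EuclideanSpace.single i (1:ℝ))) j
      = ⟪R (EuclideanSpace.single i (1:ℝ)), EuclideanSpace.single j (1:ℝ)⟫ := by
    rw [EuclideanSpace.inner_single_right]; simp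
  have h2 : (R.symm (EuclideanSpace.single j (1:ℝ))) i
      = ⟪EuclideanSpace.single i (1:ℝ), R.symm (EuclideanSpace.single j (1:ℝ))⟫ := by
    rw [EuclideanSpace.inner_single_left]; simp
  rw [h1, h2, ← R.inner_map_map (EuclideanSpace.single i (1:ℝ)), R.apply_symm_apply]

lemma aux_orth (R : E2 ≃ₗᵢ[ℝ] E2) (j k : Fin 2) :
    ∑ i : Fin 2, (R (EuclideanSpace.single i (1:ℝ))) j
        * (R (EuclideanSpace.single i (1:ℝ))) k = if j = k then 1 else 0 := by
  have h := R.symm.inner_map_map (EuclideanSpace.single j (1:ℝ))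
    (EuclideanSpace.single k (1:ℝ))
  rw [PiLp.inner_apply] at h
  simp only [RCLike.inner_apply, conj_trivial] at h
  rw [EuclideanSpace.inner_single_left] at h
  simp only [conj_trivial, one_mul, EuclideanSpace.single_apply] at h
  calc ∑ i : Fin 2, (R (EuclideanSpace.single i (1:ℝ))) j
        * (R (EuclideanSpace.single i (1:ℝ))) k
      = ∑ i : Fin 2, (R.symm (EuclideanSpace.single j (1:ℝ))) i
        * (R.symm (EuclideanSpace.single k (1:ℝ))) i := by
        refine Finset.sum_congr rfl fun i _ => ?_
        rw [aux_coord R i j, aux_coord R i k]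
    _ = if j = k then 1 else 0 := by
        rw [← h]; exact Finset.sum_congr rfl fun i _ => mul_comm _ _

lemma aux_bilin_sum (R : E2 ≃ₗᵢ[ℝ] E2) (B : E2 →L[ℝ] E2 →L[ℝ] ℝ) :
    ∑ i : Fin 2, B (R (EuclideanSpace.single i (1:ℝ))) (R (EuclideanSpace.single i (1:ℝ)))
      = ∑ i : Fin 2, B (EuclideanSpace.single i (1:ℝ)) (EuclideanSpace.single i (1:ℝ)) := by
  have hv : ∀ v : E2, v = v 0 • EuclideanSpace.single 0 (1:ℝ)
      + v 1 • EuclideanSpace.single 1 (1:ℝ) := by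
    intro v
    ext j
    fin_cases j <;> simp [EuclideanSpace.single_apply]
  have hB : ∀ v w : E2, B v w =
      v 0 * w 0 * B (EuclideanSpace.single 0 1) (EuclideanSpace.single 0 1)
      + v 0 * w 1 * B (EuclideanSpace.single 0 1) (EuclideanSpace.single 1 1)
      + v 1 * w 0 * B (EuclideanSpace.single 1 1) (EuclideanSpace.single 0 1)
      + v 1 * w 1 * B (EuclideanSpace.single 1 1) (EuclideanSpace.single 1 1) := by
    intro v w
    conv_lhs => rw [hv v, hv w]
    simp only [map_add, _root_.map_smul, ContinuousLinearMap.add_apply,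
      ContinuousLinearMap.smul_apply, ContinuousLinearMap.coe_smul',
      Pi.smul_apply, smul_eq_mul]
    ring
  have h00 : (R (EuclideanSpace.single 0 1)) 0 * (R (EuclideanSpace.single 0 1)) 0
      + (R (EuclideanSpace.single 1 1)) 0 * (R (EuclideanSpace.single 1 1)) 0 = 1 := by
    simpa [Fin.sum_univ_two] using aux_orth R 0 0
  have h01 : (R (EuclideanSpace.single 0 1)) 0 * (R (EuclideanSpace.single 0 1)) 1
      + (R (EuclideanSpace.single 1 1)) 0 * (R (EuclideanSpace.single 1 1)) 1 = 0 := by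
    simpa [Fin.sum_univ_two] using aux_orth R 0 1
  have h11 : (R (EuclideanSpace.single 0 1)) 1 * (R (EuclideanSpace.single 0 1)) 1
      + (R (EuclideanSpace.single 1 1)) 1 * (R (EuclideanSpace.single 1 1)) 1 = 1 := by
    simpa [Fin.sum_univ_two] using aux_orth R 1 1
  simp only [Fin.sum_univ_two]
  rw [hB (R (EuclideanSpace.single 0 1)) (R (EuclideanSpace.single 0 1)),
    hB (R (EuclideanSpace.single 1 1)) (R (EuclideanSpace.single 1 1))]
  linear_combination (B (EuclideanSpace.single 0 1)) (EuclideanSpace.single 0 1) * h00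
    + ((B (EuclideanSpace.single 0 1)) (EuclideanSpace.single 1 1)
      + (B (EuclideanSpace.single 1 1)) (EuclideanSpace.single 0 1)) * h01
    + (B (EuclideanSpace.single 1 1)) (EuclideanSpace.single 1 1) * h11

lemma aux_lap_comp (R : E2 ≃ₗᵢ[ℝ] E2) (g : E2 → ℝ) (hg : ContDiff ℝ 2 g) (x : E2) :
    laplacian2 (fun y => g (R y)) x = laplacian2 g (R x) := by
  have hgd : Differentiable ℝ g := hg.differentiable two_ne_zero
  have hfd : Differentiable ℝ (fderiv ℝ g) :=
    (hg.fderiv_right (m := 1) (by norm_num)).differentiable one_ne_zero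
  set Rc : E2 →L[ℝ] E2 := (R : E2 →L[ℝ] E2) with hRc
  set M : (E2 →L[ℝ] ℝ) →L[ℝ] (E2 →L[ℝ] ℝ) :=
    (ContinuousLinearMap.compL ℝ E2 E2 ℝ).flip Rc with hM
  have e1 : fderiv ℝ (fun y => g (R y)) = fun y => M (fderiv ℝ g (R y)) := by
    funext y
    rw [aux_fderiv_comp R g hgd y]
    rfl
  have e2 : fderiv ℝ (fderiv ℝ (fun y => g (R y))) x
      = M.comp ((fderiv ℝ (fderiv ℝ g) (R x)).comp Rc) := by
    rw [e1]
    have hInner : HasFDerivAt (fun y => fderiv ℝ g (R y))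
        ((fderiv ℝ (fderiv ℝ g) (R x)).comp Rc) x :=
      (hfd (R x)).hasFDerivAt.comp x R.hasFDerivAt
    exact (M.hasFDerivAt.comp x hInner).fderiv
  unfold laplacian2
  rw [e2]
  have : ∀ i : Fin 2,
      (M.comp ((fderiv ℝ (fderiv ℝ g) (R x)).comp Rc)) (EuclideanSpace.single i 1)
          (EuclideanSpace.single i 1)
        = (fderiv ℝ (fderiv ℝ g) (R x)) (R (EuclideanSpace.single i 1))
            (R (EuclideanSpace.single i 1)) := by
    intro i
    rfl
  rw [Finset.sum_congr rfl fun i _ => this i]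
  exact aux_bilin_sum R (fderiv ℝ (fderiv ℝ g) (R x))

lemma aux_div_comp (R : E2 ≃ₗᵢ[ℝ] E2) (v : E2 → E2) (hv : Differentiable ℝ v) (x : E2) :
    divergence2 (fun y => R.symm (v (R y))) x = divergence2 v (R x) := by
  have e1 : fderiv ℝ (fun y => R.symm (v (R y))) x
      = ((R.symm : E2 →L[ℝ] E2).comp (fderiv ℝ v (R x))).comp (R : E2 →L[ℝ] E2) := by
    rw [show (fun y => R.symm (v (R y))) = (R.symm ∘ fun y => v (R y)) from rfl,
      R.symm.comp_fderiv, aux_fderiv_comp R v hv x, ContinuousLinearMap.comp_assoc]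
  unfold divergence2
  rw [e1]
  rw [ContinuousLinearMap.toLinearMap_comp, ContinuousLinearMap.toLinearMap_comp,
    LinearMap.trace_comp_comm']
  rw [← LinearMap.comp_assoc]
  have hid : ((R : E2 →L[ℝ] E2) : E2 →ₗ[ℝ] E2).comp
      ((R.symm : E2 →L[ℝ] E2) : E2 →ₗ[ℝ] E2) = LinearMap.id := by
    ext y
    simp
  rw [hid, LinearMap.id_comp]

/-- If the forcing `f` is invariant under the orthogonal transformation `R`,
then the solution set of the vorticity Navier-Stokes equations is closed under
`R`: `u_R (x,t) = R⁻¹ u (R x, t)`, `w_R (x,t) = w (R x, t)` solve the same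
equations with the same forcing `f`. -/
theorem navierStokes_vorticity_closed_under_symmetry
    (ν : ℝ)
    (R : EuclideanSpace ℝ (Fin 2) ≃ₗᵢ[ℝ] EuclideanSpace ℝ (Fin 2))
    (u : EuclideanSpace ℝ (Fin 2) × ℝ → EuclideanSpace ℝ (Fin 2))
    (w : EuclideanSpace ℝ (Fin 2) × ℝ → ℝ)
    (f : EuclideanSpace ℝ (Fin 2) → ℝ)
    (hfR : ∀ x : EuclideanSpace ℝ (Fin 2), f (R x) = f x)
    (hw : ∀ t : ℝ, ContDiff ℝ 2 (fun x => w (x, t)))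
    (hu : ∀ t : ℝ, Differentiable ℝ (fun x => u (x, t)))
    (hwt : ∀ x : EuclideanSpace ℝ (Fin 2), Differentiable ℝ (fun t => w (x, t)))
    (heq : ∀ (x : EuclideanSpace ℝ (Fin 2)) (t : ℝ),
      deriv (fun s => w (x, s)) t + ⟪u (x, t), gradient (fun y => w (y, t)) x⟫ =
        ν * laplacian2 (fun y => w (y, t)) x + f x)
    (hdiv : ∀ (x : EuclideanSpace ℝ (Fin 2)) (t : ℝ),
      divergence2 (fun y => u (y, t)) x = 0) :
    (∀ (x : EuclideanSpace ℝ (Fin 2)) (t : ℝ),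
      deriv (fun s => w (R x, s)) t +
          ⟪R.symm (u (R x, t)), gradient (fun y => w (R y, t)) x⟫ =
        ν * laplacian2 (fun y => w (R y, t)) x + f x) ∧
    (∀ (x : EuclideanSpace ℝ (Fin 2)) (t : ℝ),
      divergence2 (fun y => R.symm (u (R y, t))) x = 0) := by
  constructor
  · intro x t
    have hg2 : ContDiff ℝ 2 (fun y => w (y, t)) := hw t
    have hgd : Differentiable ℝ (fun y => w (y, t)) := hg2.differentiable two_ne_zero
    have h1 : gradient (fun y => w (R y, t)) x
        = R.symm (gradient (fun y => w (y, t)) (R x)) := aux_grad_comp R _ hgd x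
    have h2 : laplacian2 (fun y => w (R y, t)) x
        = laplacian2 (fun y => w (y, t)) (R x) := aux_lap_comp R _ hg2 x
    rw [h1, h2, R.symm.inner_map_map]
    have := heq (R x) t
    rw [hfR x] at this
    exact this
  · intro x t
    rw [aux_div_comp R (fun y => u (y, t)) (hu t) x]
    exact hdiv (R x) t
end

section
/- (Equivariance of the frequency-domain p4 Fourier layer) Let N ≥ 1, let ψ : ZMod 4 × (ZMod N)² → ℂ be a fixed kernel, and define the operator Φ on functions f : ZMod 4 × (ZMod N)² → ℂ by Φ(f)(s_g, x_g) := ∑_{s ∈ ZMod 4} 𝓕⁻¹( (𝓕 f(s,·)) · (ξ ↦ (𝓕 ψ(s − s_g, ·))(−ρ^{−s_g} ξ)) )(x_g). Then Φ is p4-equivariant: for every u ∈ p4 and every f, Φ(L_u f) = L_u(Φ f), where (L_u f)(h) := f(u⁻¹ · h). -/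
/-- The 90° rotation `ρ (a, b) = (−b, a)` of the grid `(ZMod N)²`. -/
def rot2 {N : ℕ} (x : ZMod N × ZMod N) : ZMod N × ZMod N := (-x.2, x.1)

/-- The `s`-fold iterate `ρˢ` of the 90° rotation, for `s : ZMod 4`
(well-defined since `ρ⁴ = id`). -/
def rotPow {N : ℕ} (s : ZMod 4) (x : ZMod N × ZMod N) : ZMod N × ZMod N :=
  rot2^[s.val] x

/-- Multiplication in the group `p4 = ZMod 4 × (ZMod N)²`:
`(s, x) · (t, y) = (s + t, x + ρˢ y)`. -/
def p4Mul {N : ℕ} (g h : ZMod 4 × (ZMod N × ZMod N)) :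
    ZMod 4 × (ZMod N × ZMod N) :=
  (g.1 + h.1, g.2 + rotPow g.1 h.2)

/-- Inversion in the group `p4`: `(s, x)⁻¹ = (−s, −ρ⁻ˢ x)`. -/
def p4Inv {N : ℕ} (g : ZMod 4 × (ZMod N × ZMod N)) :
    ZMod 4 × (ZMod N × ZMod N) :=
  (-g.1, -rotPow (-g.1) g.2)

/-- The left action of `p4` on functions: `(L_u f) (h) = f (u⁻¹ · h)`. -/
def p4L {N : ℕ} (u : ZMod 4 × (ZMod N × ZMod N))
    (f : ZMod 4 × (ZMod N × ZMod N) → ℂ) :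
    ZMod 4 × (ZMod N × ZMod N) → ℂ :=
  fun h => f (p4Mul (p4Inv u) h)

/-- The `p4` group convolution: `(f ⋆ ψ) (g) = ∑_h f (h) · ψ (g⁻¹ · h)`. -/
noncomputable def p4Conv {N : ℕ} [NeZero N]
    (f ψ : ZMod 4 × (ZMod N × ZMod N) → ℂ)
    (g : ZMod 4 × (ZMod N × ZMod N)) : ℂ :=
  ∑ h : ZMod 4 × (ZMod N × ZMod N), f h * ψ (p4Mul (p4Inv g) h)


/-- The 2D discrete Fourier transform on the grid `(ZMod N)²`:
`(𝓕 f) ξ = ∑ₓ f x · exp (−2πi (ξ₁x₁ + ξ₂x₂) / N)`, where the products `ξᵢ xᵢ`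
are computed in `ZMod N` and lifted. -/
noncomputable def dft2 (N : ℕ) [NeZero N] (f : ZMod N × ZMod N → ℂ)
    (ξ : ZMod N × ZMod N) : ℂ :=
  ∑ x : ZMod N × ZMod N,
    f x * Complex.exp (-(2 * Real.pi * Complex.I) *
      (((ξ.1 * x.1).val : ℂ) + ((ξ.2 * x.2).val : ℂ)) / (N : ℂ))

/-- The 2D inverse discrete Fourier transform on the grid `(ZMod N)²`:
`(𝓕⁻¹ F) x = N⁻² ∑_ξ F ξ · exp (2πi (ξ₁x₁ + ξ₂x₂) / N)`. -/
noncomputable def idft2 (N : ℕ) [NeZero N] (F : ZMod N × ZMod N → ℂ)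
    (x : ZMod N × ZMod N) : ℂ :=
  ((N : ℂ) ^ 2)⁻¹ *
    ∑ ξ : ZMod N × ZMod N,
      F ξ * Complex.exp ((2 * Real.pi * Complex.I) *
        (((ξ.1 * x.1).val : ℂ) + ((ξ.2 * x.2).val : ℂ)) / (N : ℂ))

/-- The frequency-domain `p4` Fourier layer with kernel `ψ`:
`Φ (f) (s_g, x_g) = ∑_s 𝓕⁻¹ ((𝓕 f (s, ·)) · (ξ ↦ (𝓕 ψ (s − s_g, ·)) (−ρ^{−s_g} ξ))) (x_g)`. -/
noncomputable def gFourierLayer (N : ℕ) [NeZero N]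
    (ψ f : ZMod 4 × (ZMod N × ZMod N) → ℂ) :
    ZMod 4 × (ZMod N × ZMod N) → ℂ :=
  fun g =>
    ∑ s : ZMod 4,
      idft2 N
        (fun ξ => dft2 N (fun x => f (s, x)) ξ *
          dft2 N (fun x => ψ (s - g.1, x)) (-(rotPow (-g.1) ξ))) g.2


namespace P4Aux
open Complex Finset

section Rot
variable {N : ℕ}

lemma rot2_four (x : ZMod N × ZMod N) : rot2^[4] x = x := by
  show rot2 (rot2 (rot2 (rot2 x))) = x
  simp [rot2]

lemma rot2_iter_four_mul (m : ℕ) (x : ZMod N × ZMod N) : rot2^[4*m] x = x := by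
  induction m with
  | zero => simp
  | succ k ih => rw [Nat.mul_succ, Function.iterate_add_apply, rot2_four, ih]

lemma rot2_iter_mod (n : ℕ) (x : ZMod N × ZMod N) : rot2^[n] x = rot2^[n % 4] x := by
  conv_lhs => rw [← Nat.div_add_mod n 4]
  rw [Function.iterate_add_apply, rot2_iter_four_mul]

lemma rotPow_add (s t : ZMod 4) (x : ZMod N × ZMod N) :
    rotPow (s + t) x = rotPow s (rotPow t x) := by
  unfold rotPow
  rw [← Function.iterate_add_apply, rot2_iter_mod (s.val + t.val), ZMod.val_add]

lemma rotPow_zero (x : ZMod N × ZMod N) : rotPow 0 x = x := by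
  simp [rotPow]

lemma rotPow_neg_rotPow (k : ZMod 4) (x : ZMod N × ZMod N) :
    rotPow (-k) (rotPow k x) = x := by
  rw [← rotPow_add, neg_add_cancel, rotPow_zero]

lemma rotPow_rotPow_neg (k : ZMod 4) (x : ZMod N × ZMod N) :
    rotPow k (rotPow (-k) x) = x := by
  rw [← rotPow_add, add_neg_cancel, rotPow_zero]

lemma rot2_add (a b : ZMod N × ZMod N) : rot2 (a + b) = rot2 a + rot2 b := by
  simp [rot2, Prod.ext_iff, add_comm]

lemma rotPow_map_add (k : ZMod 4) (a b : ZMod N × ZMod N) :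
    rotPow k (a + b) = rotPow k a + rotPow k b := by
  unfold rotPow
  generalize k.val = n
  induction n with
  | zero => simp
  | succ m ih => simp [Function.iterate_succ_apply', ih, rot2_add]

lemma rot2_neg (a : ZMod N × ZMod N) : rot2 (-a) = -rot2 a := by
  simp [rot2, Prod.ext_iff]

lemma rotPow_map_neg (k : ZMod 4) (a : ZMod N × ZMod N) :
    rotPow k (-a) = -rotPow k a := by
  unfold rotPow
  generalize k.val = n
  induction n with
  | zero => simp
  | succ m ih => simp [Function.iterate_succ_apply', ih, rot2_neg]

lemma rotPow_map_sub (k : ZMod 4) (a b : ZMod N × ZMod N) :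
    rotPow k (a - b) = rotPow k a - rotPow k b := by
  rw [sub_eq_add_neg, rotPow_map_add, rotPow_map_neg, ← sub_eq_add_neg]

lemma p4Mul_assoc (a b c : ZMod 4 × (ZMod N × ZMod N)) :
    p4Mul (p4Mul a b) c = p4Mul a (p4Mul b c) := by
  unfold p4Mul
  refine Prod.ext (add_assoc _ _ _) ?_
  simp only
  rw [rotPow_map_add, rotPow_add, add_assoc]

lemma p4Inv_mul_cancel (u h : ZMod 4 × (ZMod N × ZMod N)) :
    p4Mul (p4Inv u) (p4Mul u h) = h := by
  unfold p4Mul p4Inv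
  refine Prod.ext (by simp) ?_
  simp only
  rw [rotPow_map_add, ← rotPow_add, neg_add_cancel, rotPow_zero]
  abel

lemma p4Mul_inv_cancel (u h : ZMod 4 × (ZMod N × ZMod N)) :
    p4Mul u (p4Mul (p4Inv u) h) = h := by
  unfold p4Mul p4Inv
  refine Prod.ext (by simp) ?_
  simp only
  rw [rotPow_map_add, rotPow_map_neg, ← rotPow_add, add_neg_cancel, rotPow_zero,
    rotPow_rotPow_neg]
  abel

lemma p4Inv_inv (u : ZMod 4 × (ZMod N × ZMod N)) : p4Inv (p4Inv u) = u := by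
  unfold p4Inv
  refine Prod.ext (by simp) ?_
  simp only [neg_neg]
  rw [rotPow_map_neg, neg_neg, rotPow_rotPow_neg]

lemma p4Inv_mul (a b : ZMod 4 × (ZMod N × ZMod N)) :
    p4Inv (p4Mul a b) = p4Mul (p4Inv b) (p4Inv a) := by
  unfold p4Mul p4Inv
  refine Prod.ext (by simp [neg_add_rev]) ?_
  simp only [rotPow_map_add, rotPow_map_neg, ← rotPow_add]
  have h1 : -(a.1 + b.1) + a.1 = -b.1 := by ring
  have h2 : -b.1 + -a.1 = -(a.1 + b.1) := by ring
  rw [h1, h2]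
  abel

lemma p4_shift (g u h : ZMod 4 × (ZMod N × ZMod N)) :
    p4Mul (p4Inv (p4Mul (p4Inv u) g)) (p4Mul (p4Inv u) h) = p4Mul (p4Inv g) h := by
  rw [p4Inv_mul, p4Inv_inv, p4Mul_assoc, p4Mul_inv_cancel]

end Rot

variable {N : ℕ} [NeZero N]

noncomputable def e (N : ℕ) [NeZero N] (m : ZMod N) : ℂ :=
  Complex.exp (2 * Real.pi * Complex.I * (m.val : ℂ) / N)

lemma hNc : (N : ℂ) ≠ 0 := Nat.cast_ne_zero.mpr (NeZero.ne N)

lemma exp_nat_mod (k : ℕ) :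
    Complex.exp (2 * Real.pi * Complex.I * (k : ℂ) / N)
      = Complex.exp (2 * Real.pi * Complex.I * ((k % N : ℕ) : ℂ) / N) := by
  conv_lhs => rw [← Nat.mod_add_div k N]
  have hN : (N : ℂ) ≠ 0 := hNc
  have : (2 * Real.pi * Complex.I * ((k % N + N * (k / N) : ℕ) : ℂ) / N)
      = 2 * Real.pi * Complex.I * ((k % N : ℕ) : ℂ) / N
        + ((k / N : ℕ) : ℂ) * (2 * Real.pi * Complex.I) := by
    push_cast
    field_simp
  rw [this, Complex.exp_add]
  have h1 : Complex.exp (((k / N : ℕ) : ℂ) * (2 * Real.pi * Complex.I)) = 1 := by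
    have := Complex.exp_int_mul_two_pi_mul_I ((k / N : ℕ) : ℤ)
    simpa using this
  rw [h1, mul_one]

lemma e_add (a b : ZMod N) : e N (a + b) = e N a * e N b := by
  unfold e
  rw [← Complex.exp_add, ZMod.val_add, ← exp_nat_mod]
  congr 1
  push_cast
  ring

lemma e_zero : e N 0 = 1 := by
  simp [e]

lemma e_neg_eq (m : ZMod N) :
    e N (-m) = Complex.exp (-(2 * Real.pi * Complex.I) * (m.val : ℂ) / N) := by
  have h1 : e N (-m) * e N m = 1 := by
    rw [← e_add, neg_add_cancel, e_zero]
  have h2 : -(2 * Real.pi * Complex.I) * (m.val : ℂ) / N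
      = -(2 * Real.pi * Complex.I * (m.val : ℂ) / N) := by ring
  rw [h2, Complex.exp_neg]
  exact eq_inv_of_mul_eq_one_left h1

lemma e_ne_one {v : ZMod N} (hv : v ≠ 0) : e N v ≠ 1 := by
  intro h
  unfold e at h
  rw [Complex.exp_eq_one_iff] at h
  obtain ⟨n, hn⟩ := h
  have h2pi : (2 * (Real.pi : ℂ) * Complex.I) ≠ 0 := by
    simp [Real.pi_ne_zero, Complex.I_ne_zero]
  have hN : (N : ℂ) ≠ 0 := hNc
  have hval : (v.val : ℂ) = (n : ℂ) * N := by
    have h3 : 2 * (Real.pi : ℂ) * Complex.I * ((v.val : ℂ) / N)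
        = 2 * (Real.pi : ℂ) * Complex.I * (n : ℂ) := by
      rw [← mul_div_assoc, hn]; ring
    have h4 := mul_left_cancel₀ h2pi h3
    rw [div_eq_iff hN] at h4
    exact h4
  have hvz : (v.val : ℤ) = n * N := by exact_mod_cast hval
  have hdvd : (N : ℤ) ∣ (v.val : ℤ) := ⟨n, by linarith [hvz]⟩
  have hdvd' : N ∣ v.val := Int.ofNat_dvd.mp (by exact_mod_cast hdvd)
  have := Nat.eq_zero_of_dvd_of_lt hdvd' (ZMod.val_lt v)
  exact hv (by rwa [ZMod.val_eq_zero] at this)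

lemma e_sum (v : ZMod N) :
    ∑ a : ZMod N, e N (a * v) = if v = 0 then (N : ℂ) else 0 := by
  split_ifs with h
  · subst h
    simp [e_zero]
  · have key : e N v * ∑ a : ZMod N, e N (a * v) = ∑ a : ZMod N, e N (a * v) := by
      rw [Finset.mul_sum]
      refine Fintype.sum_equiv (Equiv.addLeft (1 : ZMod N)) _ _ ?_
      intro a
      rw [← e_add]
      congr 1
      show v + a * v = (1 + a) * v
      ring
    have h0 : (e N v - 1) * ∑ a : ZMod N, e N (a * v) = 0 := by
      rw [sub_mul, one_mul, key, sub_self]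
    rcases mul_eq_zero.mp h0 with h1 | h2
    · exact absurd (sub_eq_zero.mp h1) (e_ne_one h)
    · exact h2

noncomputable def EE (N : ℕ) [NeZero N] (ξ x : ZMod N × ZMod N) : ℂ :=
  e N (ξ.1 * x.1) * e N (ξ.2 * x.2)

lemma EE_sum (w : ZMod N × ZMod N) :
    ∑ ξ : ZMod N × ZMod N, EE N ξ w = if w = 0 then ((N : ℂ))^2 else 0 := by
  rw [Fintype.sum_prod_type]
  have hfac : (∑ a : ZMod N, ∑ b : ZMod N, e N (a * w.1) * e N (b * w.2))
      = (∑ a : ZMod N, e N (a * w.1)) * (∑ b : ZMod N, e N (b * w.2)) :=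
    (Finset.sum_mul_sum _ _ _ _).symm
  show (∑ a : ZMod N, ∑ b : ZMod N, e N (a * w.1) * e N (b * w.2)) = _
  rw [hfac, e_sum, e_sum]
  by_cases h1 : w.1 = 0 <;> by_cases h2 : w.2 = 0 <;>
    simp [h1, h2, Prod.ext_iff, sq]

lemma dft2_eq (f : ZMod N × ZMod N → ℂ) (ξ : ZMod N × ZMod N) :
    dft2 N f ξ = ∑ x : ZMod N × ZMod N, f x * EE N (-ξ) x := by
  unfold dft2
  refine Finset.sum_congr rfl fun x _ => ?_
  congr 1
  rw [show -(2 * (Real.pi : ℂ) * Complex.I) *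
        (((ξ.1 * x.1).val : ℂ) + ((ξ.2 * x.2).val : ℂ)) / (N : ℂ)
      = -(2 * (Real.pi : ℂ) * Complex.I) * ((ξ.1 * x.1).val : ℂ) / N
        + -(2 * (Real.pi : ℂ) * Complex.I) * ((ξ.2 * x.2).val : ℂ) / N from by ring,
    Complex.exp_add, ← e_neg_eq, ← e_neg_eq]
  simp [EE, neg_mul]

lemma idft2_eq (F : ZMod N × ZMod N → ℂ) (x : ZMod N × ZMod N) :
    idft2 N F x = (((N : ℂ))^2)⁻¹ * ∑ ξ : ZMod N × ZMod N, F ξ * EE N ξ x := by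
  unfold idft2
  congr 1
  refine Finset.sum_congr rfl fun ξ _ => ?_
  congr 1
  rw [show (2 * (Real.pi : ℂ) * Complex.I) *
        (((ξ.1 * x.1).val : ℂ) + ((ξ.2 * x.2).val : ℂ)) / (N : ℂ)
      = 2 * (Real.pi : ℂ) * Complex.I * ((ξ.1 * x.1).val : ℂ) / N
        + 2 * (Real.pi : ℂ) * Complex.I * ((ξ.2 * x.2).val : ℂ) / N from by ring,
    Complex.exp_add]
  simp [EE, e]

lemma EE_add_right (ξ a b : ZMod N × ZMod N) :
    EE N ξ (a + b) = EE N ξ a * EE N ξ b := by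
  simp only [EE, Prod.fst_add, Prod.snd_add, mul_add, e_add]
  ring

lemma EE_neg_left (ξ x : ZMod N × ZMod N) : EE N (-ξ) x = EE N ξ (-x) := by
  simp [EE, neg_mul, mul_neg]

lemma EE_rot (ξ x : ZMod N × ZMod N) : EE N (rot2 ξ) (rot2 x) = EE N ξ x := by
  simp [EE, rot2, neg_mul_neg, mul_comm]

lemma EE_rotPow (s : ZMod 4) (ξ x : ZMod N × ZMod N) :
    EE N (rotPow s ξ) (rotPow s x) = EE N ξ x := by
  unfold rotPow
  generalize s.val = n
  induction n with
  | zero => simp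
  | succ m ih =>
      rw [Function.iterate_succ_apply', Function.iterate_succ_apply', EE_rot, ih]

lemma EE_rotPow_left (k : ZMod 4) (ξ z : ZMod N × ZMod N) :
    EE N (rotPow k ξ) z = EE N ξ (rotPow (-k) z) := by
  conv_lhs => rw [show z = rotPow k (rotPow (-k) z) from (rotPow_rotPow_neg k z).symm]
  rw [EE_rotPow]

lemma key (F G : ZMod N × ZMod N → ℂ) (k : ZMod 4) (xg : ZMod N × ZMod N) :
    idft2 N (fun ξ => dft2 N F ξ * dft2 N G (-(rotPow k ξ))) xg
      = ∑ y : ZMod N × ZMod N, F y * G (rotPow k (y - xg)) := by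
  have step : ∀ ξ : ZMod N × ZMod N,
      dft2 N F ξ * dft2 N G (-(rotPow k ξ)) * EE N ξ xg
        = ∑ y : ZMod N × ZMod N, ∑ z : ZMod N × ZMod N,
            F y * G z * EE N ξ (-y + (rotPow (-k) z + xg)) := by
    intro ξ
    rw [dft2_eq, dft2_eq, Finset.sum_mul_sum, Finset.sum_mul]
    refine Finset.sum_congr rfl fun y _ => ?_
    rw [Finset.sum_mul]
    refine Finset.sum_congr rfl fun z _ => ?_
    rw [neg_neg, EE_neg_left, EE_rotPow_left, EE_add_right, EE_add_right]
    ring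
  have hw : ∀ y z : ZMod N × ZMod N,
      (-y + (rotPow (-k) z + xg) = 0) ↔ (z = rotPow k (y - xg)) := by
    intro y z
    constructor
    · intro h
      have h2 : rotPow (-k) z = y - xg := by linear_combination h
      rw [← h2, rotPow_rotPow_neg]
    · rintro rfl
      rw [rotPow_neg_rotPow]
      abel
  have hN2 : ((N : ℂ))^2 ≠ 0 := pow_ne_zero _ hNc
  calc idft2 N (fun ξ => dft2 N F ξ * dft2 N G (-(rotPow k ξ))) xg
      = (((N : ℂ))^2)⁻¹ * ∑ ξ : ZMod N × ZMod N,
          dft2 N F ξ * dft2 N G (-(rotPow k ξ)) * EE N ξ xg := idft2_eq _ _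
    _ = (((N : ℂ))^2)⁻¹ * ∑ ξ : ZMod N × ZMod N, ∑ y : ZMod N × ZMod N,
          ∑ z : ZMod N × ZMod N, F y * G z * EE N ξ (-y + (rotPow (-k) z + xg)) := by
        rw [Finset.sum_congr rfl fun ξ _ => step ξ]
    _ = (((N : ℂ))^2)⁻¹ * ∑ y : ZMod N × ZMod N, ∑ z : ZMod N × ZMod N,
          F y * G z * ∑ ξ : ZMod N × ZMod N, EE N ξ (-y + (rotPow (-k) z + xg)) := by
        congr 1
        rw [Finset.sum_comm]
        refine Finset.sum_congr rfl fun y _ => ?_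
        rw [Finset.sum_comm]
        refine Finset.sum_congr rfl fun z _ => ?_
        rw [← Finset.mul_sum]
    _ = (((N : ℂ))^2)⁻¹ * ∑ y : ZMod N × ZMod N,
          (F y * G (rotPow k (y - xg)) * ((N : ℂ))^2) := by
        congr 1
        refine Finset.sum_congr rfl fun y _ => ?_
        simp only [EE_sum, hw, mul_ite, mul_zero]
        rw [Finset.sum_ite_eq' Finset.univ (rotPow k (y - xg))
          (fun z => F y * G z * ((N : ℂ))^2)]
        simp
    _ = ∑ y : ZMod N × ZMod N, F y * G (rotPow k (y - xg)) := by
        rw [← Finset.sum_mul, mul_comm, mul_assoc, mul_inv_cancel₀ hN2, mul_one]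

lemma layer_eq_conv (ψ f : ZMod 4 × (ZMod N × ZMod N) → ℂ)
    (g : ZMod 4 × (ZMod N × ZMod N)) :
    gFourierLayer N ψ f g = p4Conv f ψ g := by
  unfold gFourierLayer p4Conv
  rw [Fintype.sum_prod_type]
  refine Finset.sum_congr rfl fun s _ => ?_
  rw [key (fun x => f (s, x)) (fun x => ψ (s - g.1, x)) (-g.1) g.2]
  refine Finset.sum_congr rfl fun y _ => ?_
  have harg : ((s - g.1 : ZMod 4), rotPow (-g.1) (y - g.2)) = p4Mul (p4Inv g) (s, y) := by
    unfold p4Mul p4Inv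
    refine Prod.ext (by simp [sub_eq_neg_add]) ?_
    simp only
    rw [rotPow_map_sub, sub_eq_neg_add]
  rw [← harg]

lemma conv_equiv (f ψ : ZMod 4 × (ZMod N × ZMod N) → ℂ)
    (u g : ZMod 4 × (ZMod N × ZMod N)) :
    p4Conv (p4L u f) ψ g = p4Conv f ψ (p4Mul (p4Inv u) g) := by
  unfold p4Conv p4L
  refine Fintype.sum_equiv (Equiv.mk (fun h => p4Mul (p4Inv u) h) (fun h => p4Mul u h)
    (fun h => p4Mul_inv_cancel u h) (fun h => p4Inv_mul_cancel u h)) _ _ ?_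
  intro h
  simp only [Equiv.coe_fn_mk]
  rw [p4_shift]

end P4Aux

/-- Equivariance of the frequency-domain `p4` Fourier layer:
`Φ (L_u f) = L_u (Φ f)`. -/
theorem gFourierLayer_equivariant (N : ℕ) [NeZero N] (hN : 1 ≤ N)
    (ψ : ZMod 4 × (ZMod N × ZMod N) → ℂ)
    (u : ZMod 4 × (ZMod N × ZMod N))
    (f : ZMod 4 × (ZMod N × ZMod N) → ℂ) :
    gFourierLayer N ψ (p4L u f) = p4L u (gFourierLayer N ψ f) := by
  funext g
  rw [P4Aux.layer_eq_conv, P4Aux.conv_equiv]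
  show _ = gFourierLayer N ψ f (p4Mul (p4Inv u) g)
  rw [P4Aux.layer_eq_conv]
end
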